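/- arXiv:1611.03118 — 3 statements merged into one kernel-verified Lean document; each statement's English description precedes it below -/
import Mathlib

section
/- For every α>0 and every sufficiently large n, every n-vertex graph L=(V,E) with |E| ≥ (5/9+α)n²/2 contains an induced subgraph R ⊆ L satisfying: (i) |V(R)| ≥ (2/3+α/2)n; (ii) e_L(V(R), V∖V(R)) ≤ αn²/4 and e(R) ≥ (5/9+α/2)n²/2 − (n−|V(R)|)²/2; and (iii) R is (α/72)-inseparable. -/
open Finset

variable {V : Type} [Fintype V] [DecidableEq V]

/-- The degree of a vertex in a hypergraph given by its edge set. -/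
def hypDeg (E : Finset (Finset V)) (v : V) : ℕ :=
  (E.filter (fun e => v ∈ e)).card

/-- The pair degree of two vertices in a hypergraph. -/
def pairDeg (E : Finset (Finset V)) (u v : V) : ℕ :=
  (E.filter (fun e => u ∈ e ∧ v ∈ e)).card

/-- The joint neighbourhood `N(u,v) = {w : uvw ∈ E}`. -/
def jointNbhd (E : Finset (Finset V)) (u v : V) : Finset V :=
  Finset.univ.filter (fun w => ({u, v, w} : Finset V) ∈ E)

/-- A 3-uniform hypergraph has a tight Hamiltonian cycle: a cyclic ordering of all
vertices such that every three cyclically consecutive vertices form an edge. -/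
def HasTightHamCycle (E : Finset (Finset V)) : Prop :=
  ∃ x : ZMod (Fintype.card V) → V, Function.Bijective x ∧
    ∀ i : ZMod (Fintype.card V), ({x i, x (i + 1), x (i + 2)} : Finset V) ∈ E

/-- The link graph of a vertex `v`. -/
def linkGraph (E : Finset (Finset V)) (v : V) : SimpleGraph V where
  Adj x y := x ≠ y ∧ ({v, x, y} : Finset V) ∈ E
  symm := ⟨by
    rintro x y ⟨hxy, he⟩
    exact ⟨hxy.symm, by rwa [Finset.pair_comm y x]⟩⟩
  loopless := ⟨fun x h => h.1 rfl⟩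

instance (E : Finset (Finset V)) (v : V) : DecidableRel (linkGraph E v).Adj :=
  fun x y => inferInstanceAs (Decidable (x ≠ y ∧ ({v, x, y} : Finset V) ∈ E))

/-- Number of edges of a graph with both endpoints in `A`. -/
def eIn (G : SimpleGraph V) [DecidableRel G.Adj] (A : Finset V) : ℕ :=
  (G.edgeFinset.filter (fun e => e ∈ A.sym2)).card

/-- Number of edges of a graph with one endpoint in `A` and one in `B`
(for disjoint `A` `B`, as the count of ordered pairs). -/
def eBetween (G : SimpleGraph V) [DecidableRel G.Adj] (A B : Finset V) : ℕ :=
  ((A ×ˢ B).filter (fun p => G.Adj p.1 p.2)).card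

/-- Number of `x`-`y` paths of length `k` in the subgraph of `G` induced on `A`. -/
noncomputable def pathCount (G : SimpleGraph V) (A : Finset V) (x y : V) (k : ℕ) : ℕ :=
  Nat.card {p : Fin (k + 1) → V // Function.Injective p ∧ (∀ i, p i ∈ A) ∧
    p ⟨0, by omega⟩ = x ∧ p ⟨k, by omega⟩ = y ∧
    ∀ (i : ℕ) (h : i + 1 < k + 1), G.Adj (p ⟨i, by omega⟩) (p ⟨i + 1, h⟩)}

/-- The subgraph of `G` induced on `A` is `(β,ℓ)`-robust. -/
def IsRobust (G : SimpleGraph V) (A : Finset V) (β : ℝ) (ℓ : ℕ) : Prop :=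
  ∀ x ∈ A, ∀ y ∈ A, x ≠ y → β * (A.card : ℝ) ^ (ℓ - 1) ≤ (pathCount G A x y ℓ : ℝ)

/-- The subgraph of `L` induced on `U` is `μ`-inseparable. -/
def IsInseparable (L : SimpleGraph V) [DecidableRel L.Adj] (U : Finset V) (μ : ℝ) : Prop :=
  (∀ v ∈ U, μ * (U.card : ℝ) ≤ ((U.filter (fun u => L.Adj v u)).card : ℝ)) ∧
  (∀ X Y : Finset V, Disjoint X Y → X ∪ Y = U →
    μ * (U.card : ℝ) ≤ (X.card : ℝ) → μ * (U.card : ℝ) ≤ (Y.card : ℝ) →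
    μ ^ 2 * (U.card : ℝ) ^ 2 ≤ (eBetween L X Y : ℝ))

/-- The Setup: a `3`-uniform hypergraph `E` with minimum vertex degree at least
`(5/9+α)n²/2` together with, for each vertex `v`, (the vertex set `Rv v` of) an induced
subgraph `R_v` of the link graph `L_v` as provided by the Robust subgraphs proposition. -/
def SetupHyp (α β : ℝ) (ℓ : ℕ) (E : Finset (Finset V)) (Rv : V → Finset V) : Prop :=
  (∀ e ∈ E, e.card = 3) ∧
  (∀ v : V, (5/9 + α) * (Fintype.card V : ℝ) ^ 2 / 2 ≤ (hypDeg E v : ℝ)) ∧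
  (∀ v : V, (2/3 + α/2) * (Fintype.card V : ℝ) ≤ ((Rv v).card : ℝ)) ∧
  (∀ v : V, (eBetween (linkGraph E v) (Rv v) (Rv v)ᶜ : ℝ) ≤ α * (Fintype.card V : ℝ) ^ 2 / 4) ∧
  (∀ v : V, (5/9 + α/2) * (Fintype.card V : ℝ) ^ 2 / 2
      - ((Fintype.card V : ℝ) - ((Rv v).card : ℝ)) ^ 2 / 2 ≤ (eIn (linkGraph E v) (Rv v) : ℝ)) ∧
  (∀ v : V, IsRobust (linkGraph E v) (Rv v) β ℓ)

/-- The pair `xy` is `ζ`-connectable: `xy` is an edge of `R_v` for at least `ζn` vertices `v`. -/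
def Connectable (E : Finset (Finset V)) (Rv : V → Finset V) (ζ : ℝ) (x y : V) : Prop :=
  ζ * (Fintype.card V : ℝ) ≤
    (({v : V | x ∈ Rv v ∧ y ∈ Rv v ∧ (linkGraph E v).Adj x y} : Set V).ncard : ℝ)

/-- `f` enumerates the vertices of a tight path (of length `m - 2`) in the hypergraph `E`. -/
def IsTightPath (E : Finset (Finset V)) {m : ℕ} (f : Fin m → V) : Prop :=
  Function.Injective f ∧
  ∀ (i : ℕ) (h : i + 2 < m),
    ({f ⟨i, by omega⟩, f ⟨i + 1, by omega⟩, f ⟨i + 2, h⟩} : Finset V) ∈ E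

/-- Number of tight `(x,y)`-`(z,w)`-paths of length `3(ℓ+1)` in `E`. -/
noncomputable def connCount (E : Finset (Finset V)) (ℓ : ℕ) (x y z w : V) : ℕ :=
  Nat.card {f : Fin (3*ℓ+5) → V // IsTightPath E f ∧
    f ⟨0, by omega⟩ = x ∧ f ⟨1, by omega⟩ = y ∧
    f ⟨3*ℓ+3, by omega⟩ = z ∧ f ⟨3*ℓ+4, by omega⟩ = w}

/-- Number of tight `(x,y)`-`(z,w)`-paths of length `3(ℓ+1)` in `E` all of whose internal
vertices lie in `Res`. -/
noncomputable def connCountIn (E : Finset (Finset V)) (ℓ : ℕ) (Res : Finset V) (x y z w : V) : ℕ :=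
  Nat.card {f : Fin (3*ℓ+5) → V // IsTightPath E f ∧
    f ⟨0, by omega⟩ = x ∧ f ⟨1, by omega⟩ = y ∧
    f ⟨3*ℓ+3, by omega⟩ = z ∧ f ⟨3*ℓ+4, by omega⟩ = w ∧
    ∀ i : Fin (3*ℓ+5), 2 ≤ (i : ℕ) → (i : ℕ) ≤ 3*ℓ+2 → f i ∈ Res}

/-- Conclusion of the Connecting Lemma for the parameters `(ζ, θ)`. -/
def ConnProp (E : Finset (Finset V)) (Rv : V → Finset V) (ζ θ : ℝ) (ℓ : ℕ) : Prop :=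
  ∀ x y z w : V, ([x, y, z, w] : List V).Nodup →
    Connectable E Rv ζ x y → Connectable E Rv ζ z w →
    θ * (Fintype.card V : ℝ) ^ (3*ℓ+1) ≤ (connCount E ℓ x y z w : ℝ)

/-- Conclusion of the Reservoir Lemma: every pair of `ζ`-connectable pairs is connected by
many tight paths with all internal vertices in `Res`. -/
def ReservoirProp (E : Finset (Finset V)) (Rv : V → Finset V) (ζ θ : ℝ) (ℓ : ℕ)
    (Res : Finset V) : Prop :=
  ∀ x y z w : V, ([x, y, z, w] : List V).Nodup →
    Connectable E Rv ζ x y → Connectable E Rv ζ z w →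
    θ * (Res.card : ℝ) ^ (3*ℓ+1) / 2 ≤ (connCountIn E ℓ Res x y z w : ℝ)

/-- Setup 2: the Connecting Lemma holds for `(ζ*,θ*)` and `(ζ**,θ**)` and `Res` is a
reservoir set. -/
def Setup2Hyp (ζs θs ζss θss : ℝ) (ℓ : ℕ) (E : Finset (Finset V)) (Rv : V → Finset V)
    (Res : Finset V) : Prop :=
  ConnProp E Rv ζs θs ℓ ∧ ConnProp E Rv ζss θss ℓ ∧
  θs ^ 2 * (Fintype.card V : ℝ) / 2 ≤ (Res.card : ℝ) ∧
  (Res.card : ℝ) ≤ θs ^ 2 * (Fintype.card V : ℝ) ∧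
  ReservoirProp E Rv ζss θss ℓ Res

/-- A vertex `z` is absorbable. -/
def Absorbable (E : Finset (Finset V)) (Rv : V → Finset V) (ζs : ℝ) (z : V) : Prop :=
  (Fintype.card V : ℝ) ^ 4 / 2 ^ 21 ≤
    (({q : V × V × V × V |
        ({q.1, q.2.1, z} : Finset V) ∈ E ∧
        ({q.2.1, z, q.2.2.1} : Finset V) ∈ E ∧
        ({z, q.2.2.1, q.2.2.2} : Finset V) ∈ E ∧
        ({q.1, q.2.1, q.2.2.1} : Finset V) ∈ E ∧
        ({q.2.1, q.2.2.1, q.2.2.2} : Finset V) ∈ E ∧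
        Connectable E Rv ζs q.1 q.2.1 ∧
        Connectable E Rv ζs q.2.2.1 q.2.2.2} : Set (V × V × V × V)).ncard : ℝ)

/-- `(a,b,c,d,z,x,y,y',x')` is a `v`-absorber. -/
def IsAbsorber (E : Finset (Finset V)) (Rv : V → Finset V) (ζs : ℝ)
    (v a b c d z x y y' x' : V) : Prop :=
  ([a, b, c, d, z, x, y, y', x'] : List V).Nodup ∧
  v ∉ ([a, b, c, d, z, x, y, y', x'] : List V) ∧
  ({z, a, b} : Finset V) ∈ E ∧ ({z, b, c} : Finset V) ∈ E ∧ ({z, c, d} : Finset V) ∈ E ∧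
  ({z, x, y} : Finset V) ∈ E ∧ ({z, y, y'} : Finset V) ∈ E ∧ ({z, y', x'} : Finset V) ∈ E ∧
  ({x, y, y'} : Finset V) ∈ E ∧ ({y, y', x'} : Finset V) ∈ E ∧
  Connectable E Rv ζs a b ∧ Connectable E Rv ζs c d ∧
  Connectable E Rv ζs x y ∧ Connectable E Rv ζs y' x' ∧
  ({v, a, b} : Finset V) ∈ E ∧ ({v, b, c} : Finset V) ∈ E ∧ ({v, c, d} : Finset V) ∈ E

section InsepAux

set_option linter.unusedSectionVars false

variable (L : SimpleGraph V) [DecidableRel L.Adj]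

lemma eBetween_comm (A B : Finset V) : eBetween L A B = eBetween L B A := by
  unfold eBetween
  refine Finset.card_bij' (fun p _ => p.swap) (fun p _ => p.swap) ?_ ?_ ?_ ?_ <;>
    simp +contextual [Finset.mem_filter, Finset.mem_product, SimpleGraph.adj_comm]

lemma eBetween_mono_left {A A' : Finset V} (h : A ⊆ A') (B : Finset V) :
    eBetween L A B ≤ eBetween L A' B :=
  Finset.card_le_card (Finset.filter_subset_filter _
    (Finset.product_subset_product h (Finset.Subset.refl _)))

lemma eBetween_union_right (A B C : Finset V) :
    eBetween L A (B ∪ C) ≤ eBetween L A B + eBetween L A C := by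
  unfold eBetween
  rw [Finset.product_union, Finset.filter_union]
  exact Finset.card_union_le _ _

lemma eBetween_singleton_le (A : Finset V) (v : V) :
    eBetween L A {v} ≤ (A.filter (fun a => L.Adj v a)).card := by
  unfold eBetween
  apply Finset.card_le_card_of_injOn (fun p => p.1)
  · intro p hp
    simp only [Finset.mem_coe, Finset.mem_filter, Finset.mem_product, Finset.mem_singleton] at hp ⊢
    exact ⟨hp.1.1, ((hp.1.2 ▸ hp.2 : L.Adj p.1 v)).symm⟩
  · intro p hp q hq h
    simp only [Finset.mem_coe, Finset.mem_filter, Finset.mem_product,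
      Finset.mem_singleton] at hp hq
    exact Prod.ext h (hp.1.2.trans hq.1.2.symm)

lemma eBetween_empty_right (A : Finset V) : eBetween L A ∅ = 0 := by
  simp [eBetween]

lemma eIn_univ : eIn L Finset.univ = L.edgeFinset.card := by
  unfold eIn
  rw [Finset.filter_true_of_mem]
  intro e _
  rw [Finset.mem_sym2_iff]
  exact fun a _ => Finset.mem_univ a

lemma eIn_le_erase (U : Finset V) (v : V) :
    eIn L U ≤ eIn L (U.erase v) + (U.filter (fun u => L.Adj v u)).card := by
  unfold eIn
  have hsub : L.edgeFinset.filter (fun e => e ∈ U.sym2) ⊆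
      (L.edgeFinset.filter (fun e => e ∈ (U.erase v).sym2)) ∪
        ((U.filter (fun u => L.Adj v u)).image (fun u => s(v, u))) := by
    intro e
    induction e using Sym2.ind with
    | _ a b =>
      intro he
      simp only [Finset.mem_filter, SimpleGraph.mem_edgeFinset, SimpleGraph.mem_edgeSet,
        Finset.mk_mem_sym2_iff] at he
      obtain ⟨hadj, ha, hb⟩ := he
      rw [Finset.mem_union]
      by_cases hav : a = v
      · exact Or.inr (Finset.mem_image.2 ⟨b, Finset.mem_filter.2 ⟨hb, hav ▸ hadj⟩, by rw [hav]⟩)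
      · by_cases hbv : b = v
        · exact Or.inr (Finset.mem_image.2 ⟨a, Finset.mem_filter.2 ⟨ha, (hbv ▸ hadj).symm⟩,
            by rw [hbv, Sym2.eq_swap]⟩)
        · refine Or.inl ?_
          simp only [Finset.mem_filter, SimpleGraph.mem_edgeFinset, SimpleGraph.mem_edgeSet,
            Finset.mk_mem_sym2_iff]
          exact ⟨hadj, Finset.mem_erase.2 ⟨hav, ha⟩, Finset.mem_erase.2 ⟨hbv, hb⟩⟩
  calc _ ≤ _ := Finset.card_le_card hsub
    _ ≤ _ + _ := Finset.card_union_le _ _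
    _ ≤ _ := by gcongr; exact Finset.card_image_le

lemma eIn_union_le (X Y : Finset V) :
    eIn L (X ∪ Y) ≤ eIn L X + eIn L Y + eBetween L X Y := by
  unfold eIn eBetween
  have hsub : L.edgeFinset.filter (fun e => e ∈ (X ∪ Y).sym2) ⊆
      (L.edgeFinset.filter (fun e => e ∈ X.sym2)) ∪
        (L.edgeFinset.filter (fun e => e ∈ Y.sym2)) ∪
        (((X ×ˢ Y).filter (fun p => L.Adj p.1 p.2)).image (fun p => s(p.1, p.2))) := by
    intro e
    induction e using Sym2.ind with
    | _ a b =>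
      intro he
      simp only [Finset.mem_filter, SimpleGraph.mem_edgeFinset, SimpleGraph.mem_edgeSet,
        Finset.mk_mem_sym2_iff, Finset.mem_union] at he
      obtain ⟨hadj, ha, hb⟩ := he
      simp only [Finset.mem_union, Finset.mem_filter, SimpleGraph.mem_edgeFinset,
        SimpleGraph.mem_edgeSet, Finset.mk_mem_sym2_iff, Finset.mem_image]
      rcases ha with ha | ha <;> rcases hb with hb | hb
      · exact Or.inl (Or.inl ⟨hadj, ha, hb⟩)
      · exact Or.inr ⟨(a, b), ⟨Finset.mem_product.2 ⟨ha, hb⟩, hadj⟩, rfl⟩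
      · exact Or.inr ⟨(b, a), ⟨Finset.mem_product.2 ⟨hb, ha⟩, hadj.symm⟩, Sym2.eq_swap.symm⟩
      · exact Or.inl (Or.inr ⟨hadj, ha, hb⟩)
  calc _ ≤ _ := Finset.card_le_card hsub
    _ ≤ _ + _ := Finset.card_union_le _ _
    _ ≤ _ := by gcongr; exacts [Finset.card_union_le _ _, Finset.card_image_le]

lemma eIn_add_card_le (A : Finset V) : eIn L A + A.card ≤ A.sym2.card := by
  have hdisj : Disjoint (L.edgeFinset.filter (fun e => e ∈ A.sym2)) (A.image Sym2.diag) := by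
    rw [Finset.disjoint_right]
    intro e heD heF
    obtain ⟨a, _, rfl⟩ := Finset.mem_image.1 heD
    exact L.not_isDiag_of_mem_edgeSet
      (SimpleGraph.mem_edgeFinset.1 (Finset.mem_filter.1 heF).1) (Sym2.diag_isDiag a)
  have hsub : (L.edgeFinset.filter (fun e => e ∈ A.sym2)) ∪ A.image Sym2.diag ⊆ A.sym2 := by
    intro e he
    rcases Finset.mem_union.1 he with h | h
    · exact (Finset.mem_filter.1 h).2
    · obtain ⟨a, ha, rfl⟩ := Finset.mem_image.1 h
      exact Finset.diag_mem_sym2_iff.2 ha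
  calc eIn L A + A.card
      = (L.edgeFinset.filter (fun e => e ∈ A.sym2)).card + (A.image Sym2.diag).card := by
        rw [Finset.card_image_of_injective _ Sym2.diag_injective]; rfl
    _ = ((L.edgeFinset.filter (fun e => e ∈ A.sym2)) ∪ A.image Sym2.diag).card :=
        (Finset.card_union_of_disjoint hdisj).symm
    _ ≤ A.sym2.card := Finset.card_le_card hsub

lemma eIn_real_bound (A : Finset V) :
    (eIn L A : ℝ) ≤ ((A.card : ℝ) ^ 2 - A.card) / 2 := by
  have h := eIn_add_card_le L A
  rw [Finset.card_sym2] at h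
  have h2 : ((eIn L A : ℝ)) + A.card ≤ ((A.card + 1).choose 2 : ℝ) := by exact_mod_cast h
  rw [Nat.cast_choose_two] at h2
  push_cast at h2
  nlinarith [h2]

set_option maxHeartbeats 2000000 in
lemma insep_main (α : ℝ) (hα : 0 < α) (hα' : α ≤ 4/9)
    (L : SimpleGraph V) [DecidableRel L.Adj] (hN : 3 ≤ Fintype.card V)
    (hNa : 100 ≤ α * (Fintype.card V : ℝ)) :
    ∀ (k : ℕ) (U : Finset V), U.card ≤ k →
      (5/9 + α) * (Fintype.card V : ℝ) ^ 2 / 2 - ((Fintype.card V : ℝ) - U.card) ^ 2 / 2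
          - α / 24 * ((Fintype.card V : ℝ) - U.card) * (Fintype.card V : ℝ) ≤ (eIn L U : ℝ) →
      (eBetween L U Uᶜ : ℝ) ≤ α / 24 * ((Fintype.card V : ℝ) - U.card) * (Fintype.card V : ℝ) →
      (1/3 + α/4) * (Fintype.card V : ℝ) ≤ (U.card : ℝ) →
      ∃ U' : Finset V,
        (2/3 + α/2) * (Fintype.card V : ℝ) ≤ (U'.card : ℝ) ∧
        (eBetween L U' U'ᶜ : ℝ) ≤ α * (Fintype.card V : ℝ) ^ 2 / 4 ∧
        (5/9 + α/2) * (Fintype.card V : ℝ) ^ 2 / 2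
            - ((Fintype.card V : ℝ) - (U'.card : ℝ)) ^ 2 / 2 ≤ (eIn L U' : ℝ) ∧
        ((∀ v ∈ U', α/72 * (U'.card : ℝ) ≤ ((U'.filter (fun u => L.Adj v u)).card : ℝ)) ∧
         (∀ X Y : Finset V, Disjoint X Y → X ∪ Y = U' →
            α/72 * (U'.card : ℝ) ≤ (X.card : ℝ) → α/72 * (U'.card : ℝ) ≤ (Y.card : ℝ) →
            (α/72) ^ 2 * (U'.card : ℝ) ^ 2 ≤ (eBetween L X Y : ℝ))) := by
  have hN0 : (0:ℝ) ≤ (Fintype.card V : ℝ) := Nat.cast_nonneg _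
  have hN3 : (3:ℝ) ≤ (Fintype.card V : ℝ) := by exact_mod_cast hN
  intro k
  induction k with
  | zero =>
    intro U hk _ _ hC
    have h0 : U.card = 0 := Nat.le_zero.1 hk
    rw [h0] at hC
    norm_num at hC
    nlinarith
  | succ k ih =>
    intro U hk hA hB hC
    set N : ℝ := (Fintype.card V : ℝ) with hNdef
    have huN : (U.card : ℝ) ≤ N := by
      rw [hNdef]; exact_mod_cast Finset.card_le_univ U
    have hu0 : (0:ℝ) ≤ (U.card : ℝ) := Nat.cast_nonneg _
    have hEU := eIn_real_bound L U
    -- derive that U is already large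
    have hsize : (2/3 + α/2) * N ≤ (U.card : ℝ) := by
      set u : ℝ := (U.card : ℝ)
      by_contra hcon
      push_neg at hcon
      have hB' : α/4*N ≤ u - N/3 := by linarith
      have hBpos : (0:ℝ) < u - N/3 := by nlinarith
      have hprod : (u - 2/3*N) * (u - N/3) < (α/2*N) * (2/3*N) := by
        have h1 : u - 2/3*N < α/2*N := by linarith
        rcases le_or_gt (u - 2/3*N) 0 with h0 | h0
        · have h9 : (0:ℝ) < N*N := by nlinarith
          exact lt_of_le_of_lt (mul_nonpos_of_nonpos_of_nonneg h0 hBpos.le)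
            (by nlinarith [mul_pos hα h9])
        · exact mul_lt_mul h1 (by linarith) hBpos (by positivity)
      have hN100 : N ≤ α*N^2/100 := by
        linarith [mul_le_mul_of_nonneg_right hNa hN0]
      have hαuN : α*((N-u)*N) ≤ α*(N*N) := by
        apply mul_le_mul_of_nonneg_left _ hα.le
        apply mul_le_mul_of_nonneg_right _ hN0
        linarith
      have hid : u^2 + (N-u)^2 - 5/9*N^2 = 2*((u-2/3*N)*(u-N/3)) := by ring
      have hAB : α*N^2*(68/75) ≤ 2*((u - 2/3*N)*(u - N/3)) := by
        linarith [hA, hEU, hαuN, hN100, huN, hid]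
      linarith [hAB, hprod]
    have hu2 : (2:ℝ) ≤ (U.card : ℝ) := by
      nlinarith [hsize, mul_nonneg hα.le hN0, hN3]
    have hu1 : 1 ≤ U.card := by exact_mod_cast (by linarith : (1:ℝ) ≤ (U.card:ℝ))
    have hαuN2 : (0:ℝ) ≤ α * ((U.card:ℝ) * N) := by positivity
    by_cases hins :
        (∀ v ∈ U, α/72 * (U.card : ℝ) ≤ ((U.filter (fun u => L.Adj v u)).card : ℝ)) ∧
        (∀ X Y : Finset V, Disjoint X Y → X ∪ Y = U →
          α/72 * (U.card : ℝ) ≤ (X.card : ℝ) → α/72 * (U.card : ℝ) ≤ (Y.card : ℝ) →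
          (α/72) ^ 2 * (U.card : ℝ) ^ 2 ≤ (eBetween L X Y : ℝ))
    · refine ⟨U, hsize, ?_, ?_, hins⟩
      · nlinarith [hB]
      · nlinarith [hA]
    · rw [not_and_or] at hins
      rcases hins with h | h
      · -- low degree vertex: erase it
        push_neg at h
        obtain ⟨v, hv, hdeg⟩ := h
        have hcard : (U.erase v).card = U.card - 1 := Finset.card_erase_of_mem hv
        have hcast : ((U.erase v).card : ℝ) = (U.card : ℝ) - 1 := by
          rw [hcard, Nat.cast_sub hu1, Nat.cast_one]
        have hdegN : ((U.filter (fun u => L.Adj v u)).card : ℝ) < α/72 * N := by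
          calc ((U.filter (fun u => L.Adj v u)).card : ℝ) < α/72 * (U.card:ℝ) := hdeg
            _ ≤ α/72 * N := by nlinarith
        have hEe : (eIn L U : ℝ) ≤ (eIn L (U.erase v) : ℝ)
            + ((U.filter (fun u => L.Adj v u)).card : ℝ) := by
          exact_mod_cast eIn_le_erase L U v
        have hBe : (eBetween L (U.erase v) (U.erase v)ᶜ : ℝ) ≤ (eBetween L U Uᶜ : ℝ)
            + ((U.filter (fun u => L.Adj v u)).card : ℝ) := by
          have h1 : eBetween L (U.erase v) (U.erase v)ᶜ
              ≤ eBetween L (U.erase v) {v} + eBetween L (U.erase v) Uᶜ := by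
            rw [Finset.compl_erase, Finset.insert_eq]
            exact eBetween_union_right L _ _ _
          have h2 : eBetween L (U.erase v) {v} ≤ (U.filter (fun u => L.Adj v u)).card :=
            le_trans (eBetween_singleton_le L _ v)
              (Finset.card_le_card (Finset.filter_subset_filter _ (Finset.erase_subset v U)))
          have h3 : eBetween L (U.erase v) Uᶜ ≤ eBetween L U Uᶜ :=
            eBetween_mono_left L (Finset.erase_subset v U) _
          have := le_trans h1 (add_le_add h2 h3)
          push_cast
          exact_mod_cast by linarith [this]
        refine ih (U.erase v) (by omega) ?_ ?_ ?_
        · rw [hcast]; nlinarith [hA, hEe, hdegN]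
        · rw [hcast]; nlinarith [hB, hBe, hdegN]
        · rw [hcast]; nlinarith [hsize]
      · -- sparse cut: keep the bigger side
        push_neg at h
        obtain ⟨X, Y, hdisj, hXY, hx, hy, hcut⟩ := h
        have key : ∀ X Y : Finset V, Disjoint X Y → X ∪ Y = U →
            α/72 * (U.card : ℝ) ≤ (X.card : ℝ) → α/72 * (U.card : ℝ) ≤ (Y.card : ℝ) →
            (eBetween L X Y : ℝ) < (α/72) ^ 2 * (U.card : ℝ) ^ 2 → Y.card ≤ X.card →
            ∃ U' : Finset V,
              (2/3 + α/2) * N ≤ (U'.card : ℝ) ∧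
              (eBetween L U' U'ᶜ : ℝ) ≤ α * N ^ 2 / 4 ∧
              (5/9 + α/2) * N ^ 2 / 2 - (N - (U'.card : ℝ)) ^ 2 / 2 ≤ (eIn L U' : ℝ) ∧
              ((∀ v ∈ U', α/72 * (U'.card : ℝ) ≤ ((U'.filter (fun u => L.Adj v u)).card : ℝ)) ∧
               (∀ X Y : Finset V, Disjoint X Y → X ∪ Y = U' →
                  α/72 * (U'.card : ℝ) ≤ (X.card : ℝ) → α/72 * (U'.card : ℝ) ≤ (Y.card : ℝ) →
                  (α/72) ^ 2 * (U'.card : ℝ) ^ 2 ≤ (eBetween L X Y : ℝ))) := by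
          intro X Y hdisj hXY hx hy hcut hyx
          have hsum : X.card + Y.card = U.card := by
            rw [← Finset.card_union_of_disjoint hdisj, hXY]
          have hy1 : 1 ≤ Y.card := by
            by_contra hcon
            have : Y.card = 0 := by omega
            rw [this] at hy
            norm_num at hy
            nlinarith
          have hsumR : (X.card : ℝ) + (Y.card : ℝ) = (U.card : ℝ) := by exact_mod_cast hsum
          have hyxR : (Y.card : ℝ) ≤ (X.card : ℝ) := by exact_mod_cast hyx
          have hy0 : (0:ℝ) ≤ (Y.card : ℝ) := Nat.cast_nonneg _
          have hx0 : (0:ℝ) ≤ (X.card : ℝ) := Nat.cast_nonneg _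
          set u : ℝ := (U.card : ℝ)
          set x : ℝ := (X.card : ℝ)
          set y : ℝ := (Y.card : ℝ)
          have t1 : y*y ≤ y*(2*N-x-u) := by
            apply mul_le_mul_of_nonneg_left _ hy0
            linarith
          have t2 : (α/72)^2*u^2 ≤ α/24*y*N := by
            have h1 : α/24*(α/72*u)*N ≤ α/24*y*N := by
              apply mul_le_mul_of_nonneg_right _ hN0
              nlinarith
            nlinarith [mul_nonneg (mul_nonneg (mul_nonneg hα.le hα.le) hu0) (by linarith : (0:ℝ) ≤ 3*N-u)]
          have hXU : X ⊆ U := hXY ▸ Finset.subset_union_left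
          refine ih X (by omega) ?_ ?_ ?_
          · -- edge invariant
            have h1 : (eIn L U : ℝ) ≤ (eIn L X : ℝ) + (eIn L Y : ℝ) + (eBetween L X Y : ℝ) := by
              exact_mod_cast hXY ▸ eIn_union_le L X Y
            have hEY := eIn_real_bound L Y
            have hid2 : (N-x)^2/2 + α/24*(N-x)*N - ((N-u)^2/2 + α/24*(N-u)*N)
                = y*(2*N-x-u)/2 + α/24*y*N := by rw [← hsumR]; ring
            have goal_ineq : (N-u)^2/2 + α/24*(N-u)*N + (y^2-y)/2 + (α/72)^2*u^2
                ≤ (N-x)^2/2 + α/24*(N-x)*N := by linarith [t1, t2, hy0, hid2]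
            linarith [hA, h1, hEY, hcut, goal_ineq]
          · -- cut invariant
            have hcomplX : Xᶜ = Y ∪ Uᶜ := by
              ext a
              simp only [Finset.mem_compl, Finset.mem_union]
              constructor
              · intro haX
                by_cases haU : a ∈ U
                · rw [← hXY] at haU
                  rcases Finset.mem_union.1 haU with h' | h'
                  · exact absurd h' haX
                  · exact Or.inl h'
                · exact Or.inr haU
              · rintro (haY | haU)
                · exact fun haX => Finset.disjoint_left.1 hdisj haX haY
                · exact fun haX => haU (hXU haX)
            have h1 : eBetween L X Xᶜ ≤ eBetween L X Y + eBetween L U Uᶜ := by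
              rw [hcomplX]
              exact le_trans (eBetween_union_right L X Y Uᶜ)
                (by gcongr; exact eBetween_mono_left L hXU Uᶜ)
            have h1R : (eBetween L X Xᶜ : ℝ) ≤ (eBetween L X Y : ℝ) + (eBetween L U Uᶜ : ℝ) := by
              exact_mod_cast h1
            have hid3 : α/24*(N-x)*N = α/24*(N-u)*N + α/24*y*N := by rw [← hsumR]; ring
            linarith [hB, hcut, t2, h1R, hid3]
          · -- size invariant
            linarith [hsize]
        rcases le_total Y.card X.card with hyx | hyx
        · exact key X Y hdisj hXY hx hy hcut hyx
        · refine key Y X hdisj.symm (by rw [Finset.union_comm]; exact hXY) hy hx ?_ hyx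
          rw [eBetween_comm]
          exact hcut


end InsepAux

theorem robust_subgraphs_inseparable (α : ℝ) (hα : 0 < α) :
    ∃ n₀ : ℕ,
      ∀ (V : Type) [Fintype V] [DecidableEq V]
        (L : SimpleGraph V) [DecidableRel L.Adj],
        n₀ ≤ Fintype.card V →
        (5/9 + α) * (Fintype.card V : ℝ) ^ 2 / 2 ≤ (L.edgeFinset.card : ℝ) →
        ∃ U : Finset V,
          (2/3 + α/2) * (Fintype.card V : ℝ) ≤ (U.card : ℝ) ∧
          (eBetween L U Uᶜ : ℝ) ≤ α * (Fintype.card V : ℝ) ^ 2 / 4 ∧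
          (5/9 + α/2) * (Fintype.card V : ℝ) ^ 2 / 2
              - ((Fintype.card V : ℝ) - (U.card : ℝ)) ^ 2 / 2 ≤ (eIn L U : ℝ) ∧
          IsInseparable L U (α/72) := by
  refine ⟨max 3 ⌈(100:ℝ)/α⌉₊, ?_⟩
  intro V _ _ L _ hn hE
  have hN : 3 ≤ Fintype.card V := le_trans (le_max_left _ _) hn
  have hN3 : (3:ℝ) ≤ (Fintype.card V : ℝ) := by exact_mod_cast hN
  have hN0 : (0:ℝ) ≤ (Fintype.card V : ℝ) := Nat.cast_nonneg _
  have hNa : 100 ≤ α * (Fintype.card V : ℝ) := by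
    have h1 : ((⌈(100:ℝ)/α⌉₊ : ℕ) : ℝ) ≤ (Fintype.card V : ℝ) := by
      exact_mod_cast le_trans (le_max_right _ _) hn
    have h2 : (100:ℝ)/α ≤ (Fintype.card V : ℝ) := le_trans (Nat.le_ceil _) h1
    rw [div_le_iff₀ hα] at h2
    linarith
  have hEdge : (L.edgeFinset.card : ℝ)
      ≤ (Fintype.card V : ℝ) * ((Fintype.card V : ℝ) - 1) / 2 := by
    have h1 : (L.edgeFinset.card : ℝ) ≤ ((Fintype.card V).choose 2 : ℝ) := by
      exact_mod_cast SimpleGraph.card_edgeFinset_le_card_choose_two (G := L)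
    rwa [Nat.cast_choose_two] at h1
  have hα' : α ≤ 4/9 := by nlinarith [hE, hEdge, hN3]
  have hA0 : (5/9 + α) * (Fintype.card V : ℝ) ^ 2 / 2
      - ((Fintype.card V : ℝ) - ((Finset.univ : Finset V).card : ℝ)) ^ 2 / 2
      - α / 24 * ((Fintype.card V : ℝ) - ((Finset.univ : Finset V).card : ℝ))
        * (Fintype.card V : ℝ) ≤ (eIn L Finset.univ : ℝ) := by
    rw [Finset.card_univ, eIn_univ, sub_self]
    linarith [hE]
  have hB0 : (eBetween L (Finset.univ : Finset V) (Finset.univ : Finset V)ᶜ : ℝ)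
      ≤ α / 24 * ((Fintype.card V : ℝ) - ((Finset.univ : Finset V).card : ℝ))
        * (Fintype.card V : ℝ) := by
    rw [Finset.compl_univ, eBetween_empty_right, Finset.card_univ, sub_self]
    norm_num
  have hC0 : (1/3 + α/4) * (Fintype.card V : ℝ) ≤ (((Finset.univ : Finset V).card : ℕ) : ℝ) := by
    rw [Finset.card_univ]
    have := mul_le_mul_of_nonneg_right hα' hN0
    linarith
  obtain ⟨U, h1, h2, h3, h4⟩ := insep_main α hα hα' L hN hNa (Fintype.card V) Finset.univ
    (le_of_eq Finset.card_univ) hA0 hB0 hC0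
  exact ⟨U, h1, h2, h3, h4⟩
end

section
/- Let V be a set of n vertices and let R=(U,E) and R'=(U',E') be graphs with U,U' ⊆ V. If for some α>0 we have |U| ≥ (2/3+α/2)n and |E| ≥ (5/9+α/2)n²/2 − (n−|U|)²/2, and also |U'| ≥ (2/3+α/2)n and |E'| ≥ (5/9+α/2)n²/2 − (n−|U'|)²/2, then |E∩E'| ≥ αn²/2. -/
open Finset

variable {V : Type} [Fintype V] [DecidableEq V]

lemma aux_od_card {V : Type} [DecidableEq V] (s : Finset V) :
    ((s.offDiag.card : ℝ)) = (s.card : ℝ) * (s.card : ℝ) - (s.card : ℝ) := by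
  rw [Finset.offDiag_card]
  have h : s.card ≤ s.card * s.card := by
    rcases Nat.eq_zero_or_pos s.card with h | h
    · simp [h]
    · exact Nat.le_mul_of_pos_left _ h
  push_cast [Nat.cast_sub h]
  ring

lemma aux_robust_arith (α n u u' t e1 e2 : ℝ) (hα : 0 < α) (hα23 : α ≤ 2/3)
    (hn0 : 0 ≤ n)
    (hu : (2/3 + α/2) * n ≤ u) (hun : u ≤ n)
    (hu' : (2/3 + α/2) * n ≤ u') (hu'n : u' ≤ n)
    (ht1 : u + u' - n ≤ t) (ht2 : t ≤ u)
    (he1 : (5/9 + α/2) * n ^ 2 / 2 - (n - u) ^ 2 / 2 ≤ e1)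
    (he2 : (5/9 + α/2) * n ^ 2 / 2 - (n - u') ^ 2 / 2 ≤ e2) :
    α * n ^ 2 / 2 ≤ e1 + e2
      - ((u * u - u) + (u' * u' - u') - (t * t - t)) / 2 := by
  have htn0 : 0 ≤ u + u' - n := by nlinarith
  have hsq : (u + u' - n) ^ 2 ≤ t ^ 2 := by nlinarith
  have hd : (u - u') ^ 2 ≤ ((1/3 - α/2) * n) ^ 2 := by
    have h1 : u - u' ≤ (1/3 - α/2) * n := by nlinarith
    have h2 : u' - u ≤ (1/3 - α/2) * n := by nlinarith
    nlinarith [sq_nonneg (u - u'), sq_nonneg ((1/3 - α/2) * n)]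
  have key : 0 ≤ n ^ 2 * (α * (2/3 - α)) :=
    mul_nonneg (sq_nonneg n) (mul_nonneg hα.le (by linarith))
  nlinarith [key, sq_nonneg n, he1, he2, hsq, hd, ht2]

theorem robust_subgraphs_intersect
    (V : Type) [Fintype V] [DecidableEq V] (α : ℝ) (hα : 0 < α)
    (U U' : Finset V) (R R' : SimpleGraph V) [DecidableRel R.Adj] [DecidableRel R'.Adj]
    (hRU : ∀ u v : V, R.Adj u v → u ∈ U ∧ v ∈ U)
    (hR'U' : ∀ u v : V, R'.Adj u v → u ∈ U' ∧ v ∈ U')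
    (hU : (2/3 + α/2) * (Fintype.card V : ℝ) ≤ (U.card : ℝ))
    (hE : (5/9 + α/2) * (Fintype.card V : ℝ) ^ 2 / 2
        - ((Fintype.card V : ℝ) - (U.card : ℝ)) ^ 2 / 2 ≤ (R.edgeFinset.card : ℝ))
    (hU' : (2/3 + α/2) * (Fintype.card V : ℝ) ≤ (U'.card : ℝ))
    (hE' : (5/9 + α/2) * (Fintype.card V : ℝ) ^ 2 / 2
        - ((Fintype.card V : ℝ) - (U'.card : ℝ)) ^ 2 / 2 ≤ (R'.edgeFinset.card : ℝ)) :
    α * (Fintype.card V : ℝ) ^ 2 / 2 ≤ ((R.edgeFinset ∩ R'.edgeFinset).card : ℝ) := by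
  classical
  by_cases h0 : Fintype.card V = 0
  · rw [h0]
    simp
  have hn1 : (1 : ℝ) ≤ (Fintype.card V : ℝ) := by
    have : 1 ≤ Fintype.card V := Nat.one_le_iff_ne_zero.mpr h0
    exact_mod_cast this
  have hUn : (U.card : ℝ) ≤ (Fintype.card V : ℝ) := by
    exact_mod_cast Finset.card_le_univ U
  have hU'n : (U'.card : ℝ) ≤ (Fintype.card V : ℝ) := by
    exact_mod_cast Finset.card_le_univ U'
  have hα23 : α ≤ 2/3 := by nlinarith [hU, hUn]
  have hfe : R.edgeFinset ∪ R'.edgeFinset = (R ⊔ R').edgeFinset := by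
    ext e
    simp [SimpleGraph.mem_edgeFinset]
  have h1 : 2 * (R.edgeFinset ∪ R'.edgeFinset).card
      = (Finset.univ.filter fun p : V × V => (R ⊔ R').Adj p.1 p.2).card := by
    rw [hfe]
    convert SimpleGraph.two_mul_card_edgeFinset (G := R ⊔ R') using 3 <;>
      first
        | (ext e; simp [SimpleGraph.mem_edgeFinset])
        | (ext ⟨x, y⟩; simp)
  have h2 : U.offDiag ∩ U'.offDiag = (U ∩ U').offDiag := by
    ext ⟨x, y⟩
    simp only [Finset.mem_inter, Finset.mem_offDiag]
    tauto
  have h3 := Finset.card_union_add_card_inter U.offDiag U'.offDiag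
  rw [h2] at h3
  have hcount : 2 * ((R.edgeFinset ∪ R'.edgeFinset).card : ℝ)
      ≤ ((U.offDiag.card : ℝ)) + ((U'.offDiag.card : ℝ)) - (((U ∩ U').offDiag.card : ℝ)) := by
    have h4 : 2 * (R.edgeFinset ∪ R'.edgeFinset).card + (U ∩ U').offDiag.card
        ≤ U.offDiag.card + U'.offDiag.card := by
      rw [h1, ← h3]
      apply Nat.add_le_add_right
      apply Finset.card_le_card
      rintro ⟨x, y⟩ hp
      simp only [Finset.mem_filter, Finset.mem_univ, true_and, SimpleGraph.sup_adj] at hp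
      simp only [Finset.mem_union, Finset.mem_offDiag]
      rcases hp with h | h
      · exact Or.inl ⟨(hRU x y h).1, (hRU x y h).2, h.ne⟩
      · exact Or.inr ⟨(hR'U' x y h).1, (hR'U' x y h).2, h.ne⟩
    have h5 : 2 * ((R.edgeFinset ∪ R'.edgeFinset).card : ℝ) + (((U ∩ U').offDiag.card : ℝ))
        ≤ ((U.offDiag.card : ℝ)) + ((U'.offDiag.card : ℝ)) := by exact_mod_cast h4
    linarith
  have hie : ((R.edgeFinset ∩ R'.edgeFinset).card : ℝ)
      = (R.edgeFinset.card : ℝ) + (R'.edgeFinset.card : ℝ)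
        - ((R.edgeFinset ∪ R'.edgeFinset).card : ℝ) := by
    have h := Finset.card_inter_add_card_union R.edgeFinset R'.edgeFinset
    have h' : ((R.edgeFinset ∩ R'.edgeFinset).card : ℝ)
        + ((R.edgeFinset ∪ R'.edgeFinset).card : ℝ)
        = (R.edgeFinset.card : ℝ) + (R'.edgeFinset.card : ℝ) := by exact_mod_cast h
    linarith
  have ht1 : (U.card : ℝ) + (U'.card : ℝ) - (Fintype.card V : ℝ) ≤ ((U ∩ U').card : ℝ) := by
    have h1 := Finset.card_inter_add_card_union U U'
    have h2 : (U ∪ U').card ≤ Fintype.card V := Finset.card_le_univ _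
    have h1' : ((U ∩ U').card : ℝ) + ((U ∪ U').card : ℝ)
        = (U.card : ℝ) + (U'.card : ℝ) := by exact_mod_cast h1
    have h2' : ((U ∪ U').card : ℝ) ≤ (Fintype.card V : ℝ) := by exact_mod_cast h2
    linarith
  have ht2 : ((U ∩ U').card : ℝ) ≤ (U.card : ℝ) := by
    exact_mod_cast Finset.card_le_card (Finset.inter_subset_left)
  have harith := aux_robust_arith α (Fintype.card V : ℝ) (U.card : ℝ) (U'.card : ℝ)
    ((U ∩ U').card : ℝ) (R.edgeFinset.card : ℝ) (R'.edgeFinset.card : ℝ)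
    hα hα23 (by linarith) hU hUn hU' hU'n ht1 ht2 hE hE'
  rw [hie]
  rw [aux_od_card U, aux_od_card U', aux_od_card (U ∩ U')] at hcount
  linarith [hcount, harith]
end

section
/- Let H=(V,E) be a 3-uniform hypergraph on n vertices. Call an edge {x,y,z} ∈ E central if n/d(x,y) + n/d(x,z) + n/d(y,z) ≤ 28/5. If yy′z is a central edge with d(y,y′) ≥ d(y,z) ≥ d(y′,z), then |N(y,z)∩N(y,y′)| ≥ n/28, |N(y′,z)∩N(y,y′)| ≥ n/28, and d(y,z) > 5n/12. -/
open Finset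

variable {V : Type} [Fintype V] [DecidableEq V]

lemma pairDeg_eq_card' {V : Type} [Fintype V] [DecidableEq V] (E : Finset (Finset V))
    (hE3 : ∀ e ∈ E, e.card = 3) (u v : V) (huv : u ≠ v) :
    (E.filter (fun e => u ∈ e ∧ v ∈ e)).card
      = (Finset.univ.filter (fun w => ({u, v, w} : Finset V) ∈ E)).card := by
  have hpair : ({u, v} : Finset V).card = 2 := Finset.card_pair huv
  have notmem : ∀ w : V, ({u,v,w} : Finset V) ∈ E → w ∉ ({u,v} : Finset V) := by
    intro w hw hmem
    have he : ({u,v,w} : Finset V) = {u,v} := by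
      have : ({u,v,w} : Finset V) = insert w {u,v} := by ext x; simp; tauto
      rw [this, Finset.insert_eq_self.2 hmem]
    have := hE3 _ hw
    rw [he, hpair] at this
    omega
  symm
  apply Finset.card_bij (fun w _ => ({u, v, w} : Finset V))
  · intro w hw
    simp only [mem_filter, mem_univ, true_and] at hw ⊢
    exact ⟨hw, by simp, by simp⟩
  · intro w hw w' hw' h
    simp only [mem_filter, mem_univ, true_and] at hw hw'
    have h1 := notmem _ hw
    have : w ∈ ({u, v, w'} : Finset V) := h ▸ (by simp)
    simp only [Finset.mem_insert, Finset.mem_singleton] at this h1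
    push_neg at h1
    tauto
  · intro e he'
    simp only [mem_filter] at he'
    obtain ⟨heE, hu, hv⟩ := he'
    have hsub : ({u, v} : Finset V) ⊆ e := by
      intro x hx; simp only [Finset.mem_insert, Finset.mem_singleton] at hx
      rcases hx with rfl | rfl; exacts [hu, hv]
    have hcard : (e \ {u,v}).card = 1 := by
      rw [Finset.card_sdiff_of_subset hsub, hpair, hE3 _ heE]
    obtain ⟨w, hw⟩ := Finset.card_eq_one.mp hcard
    have hew : e = ({u, v, w} : Finset V) := by
      have := Finset.union_sdiff_of_subset hsub
      rw [hw] at this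
      rw [← this]; ext x; simp [or_assoc]
    refine ⟨w, ?_, hew.symm⟩
    simp only [mem_filter, mem_univ, true_and]
    rwa [← hew]

lemma key_real' (n d1 d2 d3 : ℝ) (hn : 0 < n) (h3 : 0 < d3) (h32 : d3 ≤ d2) (h21 : d2 ≤ d1)
    (h1n : d1 ≤ n)
    (hc : n/d1 + n/d2 + n/d3 ≤ 28/5) :
    n + n/28 ≤ d1 + d2 ∧ n + n/28 ≤ d1 + d3 ∧ 5*n/12 < d2 := by
  have h2 : (0:ℝ) < d2 := lt_of_lt_of_le h3 h32
  have h1 : (0:ℝ) < d1 := lt_of_lt_of_le h2 h21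
  have hc' : n*d2*d3 + n*d1*d3 + n*d1*d2 ≤ 28/5 * (d1*d2*d3) := by
    rw [div_add_div _ _ (ne_of_gt h1) (ne_of_gt h2), div_add_div _ _ (by positivity) (ne_of_gt h3),
      div_le_iff₀ (by positivity)] at hc
    nlinarith [hc]
  have hq : 10*n*d3 + 5*n*d1 ≤ 28*(d1*d3) := by
    have h5 : n*d2*d3 ≤ n*d1*d3 := by
      nlinarith [mul_nonneg (mul_nonneg (sub_nonneg.2 h21) hn.le) h3.le]
    have h6 : d2 * (2*n*d3 + n*d1) ≤ d2 * (28/5*(d1*d3)) := by nlinarith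
    have h7 := (mul_le_mul_iff_right₀ h2).mp h6
    linarith
  have h31 : d3 ≤ d1 := le_trans h32 h21
  refine ⟨?_, ?_, ?_⟩
  · nlinarith [mul_pos h1 h2, mul_pos h2 h3, mul_pos h1 h3, sq_nonneg (d1 - d2),
      sq_nonneg (d1 + d2 - 2*n), mul_nonneg (sub_nonneg.2 h1n) h3.le,
      sq_nonneg (15*d1 - 14*n), sq_nonneg (15*d2-14*n)]
  · nlinarith [sq_nonneg (28*(d1-d3) - 5*n), mul_pos h3 hn,
      mul_nonneg (sub_nonneg.2 h1n) h3.le, mul_nonneg (sub_nonneg.2 h1n) hn.le,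
      sq_nonneg (d1-d3), sq_nonneg (28*d1-17*n), sq_nonneg (28*d3-12*n)]
  · nlinarith [mul_pos h1 h2, mul_pos h2 h3, mul_pos h1 h3,
      mul_nonneg (sub_nonneg.2 h1n) h3.le, mul_nonneg (sub_nonneg.2 h32) h1.le]

lemma three_distinct' {V : Type} [DecidableEq V] (a b c : V)
    (h : ({a,b,c} : Finset V).card = 3) : a ≠ b ∧ a ≠ c ∧ b ≠ c := by
  refine ⟨?_, ?_, ?_⟩ <;> rintro rfl
  · have he : ({a,a,c} : Finset V) = {a,c} := by ext x; simp; try tauto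
    rw [he] at h
    have := Finset.card_insert_le a ({c} : Finset V)
    simp at this; omega
  · have he : ({a,b,a} : Finset V) = {a,b} := by ext x; simp; try tauto
    rw [he] at h
    have := Finset.card_insert_le a ({b} : Finset V)
    simp at this; omega
  · have he : ({a,b,b} : Finset V) = {a,b} := by ext x; simp; try tauto
    rw [he] at h
    have := Finset.card_insert_le a ({b} : Finset V)
    simp at this; omega

lemma inter_card_lb {V : Type} [Fintype V] [DecidableEq V] (A B : Finset V) :
    (A.card : ℝ) + (B.card : ℝ) - (Fintype.card V : ℝ) ≤ ((A ∩ B).card : ℝ) := by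
  have h1 := Finset.card_union_add_card_inter A B
  have h2 : (A ∪ B).card ≤ Fintype.card V := Finset.card_le_univ _
  have h1' : ((A ∪ B).card : ℝ) + ((A ∩ B).card : ℝ) = (A.card : ℝ) + (B.card : ℝ) := by
    exact_mod_cast congrArg (Nat.cast : ℕ → ℝ) h1
  have h2' : ((A ∪ B).card : ℝ) ≤ (Fintype.card V : ℝ) := by exact_mod_cast h2
  linarith

theorem central_edge_properties
    (V : Type) [Fintype V] [DecidableEq V] (E : Finset (Finset V))
    (hE3 : ∀ e ∈ E, e.card = 3)
    (y y' z : V)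
    (he : ({y, y', z} : Finset V) ∈ E)
    (hcentral : (Fintype.card V : ℝ) / (pairDeg E y y' : ℝ)
        + (Fintype.card V : ℝ) / (pairDeg E y z : ℝ)
        + (Fintype.card V : ℝ) / (pairDeg E y' z : ℝ) ≤ 28/5)
    (h1 : pairDeg E y z ≤ pairDeg E y y')
    (h2 : pairDeg E y' z ≤ pairDeg E y z) :
    (Fintype.card V : ℝ) / 28 ≤ ((jointNbhd E y z ∩ jointNbhd E y y').card : ℝ) ∧
    (Fintype.card V : ℝ) / 28 ≤ ((jointNbhd E y' z ∩ jointNbhd E y y').card : ℝ) ∧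
    5 * (Fintype.card V : ℝ) / 12 < (pairDeg E y z : ℝ) := by
    classical
  have hnpos : (0:ℝ) < (Fintype.card V : ℝ) := by
    have : 0 < Fintype.card V := Fintype.card_pos_iff.mpr ⟨y⟩
    exact_mod_cast this
  obtain ⟨hyy', hyz, hy'z⟩ := three_distinct' y y' z (hE3 _ he)
  have hd1 : pairDeg E y y' = (jointNbhd E y y').card :=
    pairDeg_eq_card' E hE3 y y' hyy'
  have hd2 : pairDeg E y z = (jointNbhd E y z).card :=
    pairDeg_eq_card' E hE3 y z hyz
  have hd3 : pairDeg E y' z = (jointNbhd E y' z).card :=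
    pairDeg_eq_card' E hE3 y' z hy'z
  have hpos3 : 0 < pairDeg E y' z := by
    apply Finset.card_pos.2
    exact ⟨{y,y',z}, Finset.mem_filter.2 ⟨he, by simp, by simp⟩⟩
  have hd1n : pairDeg E y y' ≤ Fintype.card V := hd1 ▸ Finset.card_le_univ _
  have hkey := key_real' (Fintype.card V : ℝ) (pairDeg E y y' : ℝ) (pairDeg E y z : ℝ) (pairDeg E y' z : ℝ)
    hnpos (by exact_mod_cast hpos3) (by exact_mod_cast h2) (by exact_mod_cast h1)
    (by exact_mod_cast hd1n) hcentral
  obtain ⟨k1, k2, k3⟩ := hkey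
  refine ⟨?_, ?_, k3⟩
  · have hi := inter_card_lb (jointNbhd E y z) (jointNbhd E y y')
    rw [← hd2, ← hd1] at hi
    linarith
  · have hi := inter_card_lb (jointNbhd E y' z) (jointNbhd E y y')
    rw [← hd3, ← hd1] at hi
    linarith
end
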